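/- Let Γ be a countable group acting on a countable set K and let V : ℓ²(K) → ℓ²(Γ) be a linear isometry. For x ∈ K define μ_x ∈ ℓ¹(Γ) by μ_x(t) = |(Vδ_x)(t)|². Then for every s ∈ Γ and x ∈ K, ‖s·μ_x − μ_{s·x}‖₁ ≤ 2·(2 − 2 Re⟨V*λ(s)V δ_x, δ_{s·x}⟩)^{1/2}, where λ is the left-regular representation of Γ on ℓ²(Γ) and the quantity under the square root is nonnegative. -/

import Mathlib

private lemma lpnormsq10 {ι : Type*} {E : ι → Type*} [∀ i, NormedAddCommGroup (E i)] (f : lp E 2) :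
    ‖f‖ ^ 2 = ∑' i, ‖f i‖ ^ 2 := by
  have h := lp.norm_rpow_eq_tsum (p := 2) (by norm_num) f
  simpa [Real.rpow_two] using h

set_option maxHeartbeats 1000000 in
theorem stmt10 {Γ K : Type*} [Group Γ] [Countable Γ] [Countable K]
    [DecidableEq Γ] [DecidableEq K] [MulAction Γ K]
    (V : lp (fun _ : K => ℂ) 2 →ₗᵢ[ℂ] lp (fun _ : Γ => ℂ) 2)
    (lam : Γ → (lp (fun _ : Γ => ℂ) 2 →L[ℂ] lp (fun _ : Γ => ℂ) 2))
    (hlam : ∀ (s : Γ) (ξ : lp (fun _ : Γ => ℂ) 2) (t : Γ), (lam s ξ) t = ξ (s⁻¹ * t))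
    (μ : K → Γ → ℝ)
    (hμ : ∀ x t, μ x t = ‖(V (lp.single 2 x 1)) t‖ ^ 2)
    (s : Γ) (x : K) :
    0 ≤ 2 - 2 * (inner ℂ ((ContinuousLinearMap.adjoint V.toContinuousLinearMap)
          ((lam s) (V (lp.single 2 x 1)))) (lp.single 2 (s • x) 1) : ℂ).re ∧
    (∑' t, |μ x (s⁻¹ * t) - μ (s • x) t|) ≤
      2 * Real.sqrt (2 - 2 * (inner ℂ ((ContinuousLinearMap.adjoint V.toContinuousLinearMap)
          ((lam s) (V (lp.single 2 x 1)))) (lp.single 2 (s • x) 1) : ℂ).re) := by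
  classical
  set ξ : lp (fun _ : Γ => ℂ) 2 := (lam s) (V (lp.single 2 x 1)) with hξdef
  set η : lp (fun _ : Γ => ℂ) 2 := V (lp.single 2 (s • x) 1) with hηdef
  -- rewrite the inner product through the adjoint
  have hadj : (inner ℂ ((ContinuousLinearMap.adjoint V.toContinuousLinearMap) ξ)
      (lp.single 2 (s • x) 1) : ℂ) = inner ℂ ξ η := by
    rw [ContinuousLinearMap.adjoint_inner_left]
    rfl
  rw [hadj]
  set r : ℝ := (inner ℂ ξ η : ℂ).re with hrdef
  -- norms of unit vectors
  have hδx : ‖(lp.single 2 x 1 : lp (fun _ : K => ℂ) 2)‖ = 1 := by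
    simpa using lp.norm_single (p := 2) (by norm_num) (fun _ : K => (1 : ℂ)) x
  have hδsx : ‖(lp.single 2 (s • x) 1 : lp (fun _ : K => ℂ) 2)‖ = 1 := by
    simpa using lp.norm_single (p := 2) (by norm_num) (fun _ : K => (1 : ℂ)) (s • x)
  have hη1 : ‖η‖ = 1 := by rw [hηdef, V.norm_map]; exact hδsx
  have hVx1 : ‖V (lp.single 2 x 1)‖ = 1 := by rw [V.norm_map]; exact hδx
  have hξ1 : ‖ξ‖ = 1 := by
    have hsq : ‖ξ‖ ^ 2 = ‖V (lp.single 2 x 1)‖ ^ 2 := by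
      rw [lpnormsq10 ξ, lpnormsq10 (V (lp.single 2 x 1))]
      have : ∀ t : Γ, ‖ξ t‖ ^ 2 = ‖(V (lp.single 2 x 1)) (s⁻¹ * t)‖ ^ 2 := by
        intro t; rw [hξdef, hlam]
      rw [tsum_congr this]
      have he := (Equiv.mulLeft s⁻¹).tsum_eq fun t => ‖(V (lp.single 2 x 1)) t‖ ^ 2
      simpa using he
    have h1 : ‖ξ‖ ^ 2 = 1 := by rw [hsq, hVx1]; norm_num
    nlinarith [norm_nonneg ξ]
  -- the square norm identity
  have hsubsq : ‖ξ - η‖ ^ 2 = 2 - 2 * r := by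
    have h := norm_sub_sq (𝕜 := ℂ) ξ η
    rw [hξ1, hη1] at h
    simp only [one_pow, RCLike.re_to_complex] at h
    rw [h, hrdef]; ring
  have hnonneg : 0 ≤ 2 - 2 * r := by rw [← hsubsq]; exact sq_nonneg _
  refine ⟨hnonneg, ?_⟩
  -- set up the real ℓ² vectors
  have hAmem : Memℓp (fun t : Γ => ‖ξ t - η t‖) 2 := by
    apply memℓp_gen
    have := (lp.memℓp (ξ - η)).summable (p := 2) (by norm_num)
    apply this.congr
    intro t
    simp only [lp.coeFn_sub, Pi.sub_apply, norm_norm]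
  have hBmem : Memℓp (fun t : Γ => ‖ξ t‖) 2 := by
    apply memℓp_gen
    have := (lp.memℓp ξ).summable (p := 2) (by norm_num)
    apply this.congr
    intro t; rw [norm_norm]
  have hCmem : Memℓp (fun t : Γ => ‖η t‖) 2 := by
    apply memℓp_gen
    have := (lp.memℓp η).summable (p := 2) (by norm_num)
    apply this.congr
    intro t; rw [norm_norm]
  set A : lp (fun _ : Γ => ℝ) 2 := ⟨_, hAmem⟩ with hAdef
  set B : lp (fun _ : Γ => ℝ) 2 := ⟨_, hBmem⟩ with hBdef
  set C : lp (fun _ : Γ => ℝ) 2 := ⟨_, hCmem⟩ with hCdef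
  have hA_app : ∀ t, A t = ‖ξ t - η t‖ := fun t => rfl
  have hB_app : ∀ t, B t = ‖ξ t‖ := fun t => rfl
  have hC_app : ∀ t, C t = ‖η t‖ := fun t => rfl
  have hAnorm : ‖A‖ = ‖ξ - η‖ := by
    have h1 : ‖A‖ ^ 2 = ‖ξ - η‖ ^ 2 := by
      rw [lpnormsq10 A, lpnormsq10 (ξ - η)]
      apply tsum_congr
      intro t
      rw [hA_app, norm_norm, lp.coeFn_sub, Pi.sub_apply]
    nlinarith [norm_nonneg A, norm_nonneg (ξ - η)]
  have hBnorm : ‖B‖ = 1 := by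
    have h1 : ‖B‖ ^ 2 = ‖ξ‖ ^ 2 := by
      rw [lpnormsq10 B, lpnormsq10 ξ]
      exact tsum_congr fun t => by rw [hB_app, norm_norm]
    rw [hξ1] at h1; nlinarith [norm_nonneg B]
  have hCnorm : ‖C‖ = 1 := by
    have h1 : ‖C‖ ^ 2 = ‖η‖ ^ 2 := by
      rw [lpnormsq10 C, lpnormsq10 η]
      exact tsum_congr fun t => by rw [hC_app, norm_norm]
    rw [hη1] at h1; nlinarith [norm_nonneg C]
  -- pointwise bound
  have hpt : ∀ t : Γ, |μ x (s⁻¹ * t) - μ (s • x) t| ≤ A t * (B + C) t := by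
    intro t
    have h1 : μ x (s⁻¹ * t) = ‖ξ t‖ ^ 2 := by rw [hμ, hξdef, hlam]
    have h2 : μ (s • x) t = ‖η t‖ ^ 2 := by rw [hμ, hηdef]
    have h3 : (B + C) t = ‖ξ t‖ + ‖η t‖ := by
      rw [lp.coeFn_add, Pi.add_apply, hB_app, hC_app]
    rw [h1, h2, h3, hA_app]
    have h4 : |‖ξ t‖ ^ 2 - ‖η t‖ ^ 2| = |‖ξ t‖ - ‖η t‖| * (‖ξ t‖ + ‖η t‖) := by
      rw [← abs_of_nonneg (show (0:ℝ) ≤ ‖ξ t‖ + ‖η t‖ by positivity), ← abs_mul]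
      ring_nf
    rw [h4]
    exact mul_le_mul_of_nonneg_right (abs_norm_sub_norm_le _ _) (by positivity)
  -- summability of the product
  have hprod : Summable fun t : Γ => A t * (B + C) t := by
    have := lp.summable_inner (𝕜 := ℝ) A (B + C)
    simpa [RCLike.inner_apply, mul_comm] using this
  have hLHS : Summable fun t : Γ => |μ x (s⁻¹ * t) - μ (s • x) t| := by
    exact Summable.of_nonneg_of_le (fun t => abs_nonneg _) hpt hprod
  calc (∑' t, |μ x (s⁻¹ * t) - μ (s • x) t|)
      ≤ ∑' t, A t * (B + C) t := Summable.tsum_le_tsum hpt hLHS hprod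
    _ = (inner ℝ A (B + C) : ℝ) := by
        rw [lp.inner_eq_tsum]; simp [RCLike.inner_apply, mul_comm]
    _ ≤ ‖A‖ * ‖B + C‖ := real_inner_le_norm A (B + C)
    _ ≤ ‖A‖ * (‖B‖ + ‖C‖) := by
        apply mul_le_mul_of_nonneg_left (norm_add_le B C) (norm_nonneg A)
    _ = 2 * ‖ξ - η‖ := by rw [hAnorm, hBnorm, hCnorm]; ring
    _ = 2 * Real.sqrt (2 - 2 * r) := by
        rw [← hsubsq, Real.sqrt_sq (norm_nonneg _)]
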